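/- Let $\Delta = (a_1, b_1) \times (a_2, b_2) \subset \mathbb{R}^2$ be a square of sidelength $\delta > 0$, and let $f \in C^2(\overline{\Delta})$. Then for every $(x_1, x_2) \in \Delta$: $|f(x_1,x_2)|^2 \le 4\big(\frac{1}{\delta^2}\int_\Delta |f|^2 + \int_\Delta |\nabla f|^2 + \delta^2 \int_\Delta |\partial_2 \partial_1 f|^2\big)$. -/

import Mathlib

open MeasureTheory


lemma cs_aux {α : Type*} [MeasurableSpace α] (μ : Measure α) [IsFiniteMeasure μ]
    (u : α → ℝ) (hu : Integrable u μ) (hu2 : Integrable (fun a => u a ^ 2) μ) :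
    (∫ a, u a ∂μ) ^ 2 ≤ (μ Set.univ).toReal * ∫ a, u a ^ 2 ∂μ := by
  set m := (μ Set.univ).toReal with hm
  have hm0 : 0 ≤ m := ENNReal.toReal_nonneg
  rcases eq_or_lt_of_le hm0 with h0 | hpos
  · have hz : μ Set.univ = 0 := by
      have hne := measure_ne_top μ Set.univ
      rw [← hm] at *
      exact (ENNReal.toReal_eq_zero_iff _).mp h0.symm |>.resolve_right hne
    have hμ : μ = 0 := Measure.measure_univ_eq_zero.mp hz
    simp [hμ]
  · set lam : ℝ := (∫ a, u a ∂μ) / m with hlam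
    have key : 0 ≤ ∫ a, (u a - lam) ^ 2 ∂μ := integral_nonneg fun a => sq_nonneg _
    have expand : ∫ a, (u a - lam) ^ 2 ∂μ
        = (∫ a, u a ^ 2 ∂μ) - 2 * lam * (∫ a, u a ∂μ) + lam ^ 2 * m := by
      have e1 : (fun a => (u a - lam) ^ 2)
          = fun a => u a ^ 2 - (2 * lam) * u a + lam ^ 2 := by
        funext a; ring
      have i1 : Integrable (fun a => u a ^ 2 - 2 * lam * u a) μ := by
        have := Integrable.sub hu2 (hu.const_mul (2 * lam))
        exact this
      rw [e1]
      rw [integral_add i1 (integrable_const (lam ^ 2)),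
        integral_sub hu2 (hu.const_mul (2 * lam)), MeasureTheory.integral_const_mul, integral_const]
      simp [hm, smul_eq_mul, measureReal_def]
      ring
    have hlm : lam * m = ∫ a, u a ∂μ := div_mul_cancel₀ _ (ne_of_gt hpos)
    rw [expand] at key
    nlinarith [mul_nonneg (le_of_lt hpos) key, key, hpos, hlm]

lemma cs_set {α : Type*} [MeasureSpace α] (s : Set α) (hs : volume s ≠ ⊤) (u : α → ℝ)
    (hu : IntegrableOn u s) (hu2 : IntegrableOn (fun a => u a ^ 2) s) :
    (∫ a in s, u a) ^ 2 ≤ (volume s).toReal * ∫ a in s, u a ^ 2 := by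
  haveI : IsFiniteMeasure (volume.restrict s) :=
    ⟨by rwa [Measure.restrict_apply_univ, lt_top_iff_ne_top]⟩
  simpa [Measure.restrict_apply_univ] using cs_aux (volume.restrict s) u hu hu2

section helpers

lemma integrableOn_of_bdd {α : Type*} [MeasureSpace α] {s : Set α} (hs : MeasurableSet s)
    (hμ : volume s ≠ ⊤) {h : α → ℝ} (hm : AEStronglyMeasurable h (volume.restrict s))
    {C : ℝ} (hb : ∀ y ∈ s, |h y| ≤ C) : IntegrableOn h s := by
  haveI : IsFiniteMeasure (volume.restrict s) :=
    ⟨by rwa [Measure.restrict_apply_univ, lt_top_iff_ne_top]⟩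
  exact Integrable.mono' (integrable_const C) hm
    (by
      have := (ae_restrict_iff' (μ := volume) hs).2 (ae_of_all _ hb)
      simpa [Real.norm_eq_abs] using this)

lemma sq_intervalIntegral_minmax (u : ℝ → ℝ) (c d : ℝ) :
    (∫ t in c..d, u t) ^ 2 = (∫ t in (min c d)..(max c d), u t) ^ 2 := by
  rcases le_total c d with h | h
  · rw [min_eq_left h, max_eq_right h]
  · rw [min_eq_right h, max_eq_left h, intervalIntegral.integral_symm, neg_sq]
end helpers

lemma cs_interval {c d e₁ e₂ : ℝ} (hc : c ∈ Set.Ioo e₁ e₂) (hd : d ∈ Set.Ioo e₁ e₂)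
    (u : ℝ → ℝ) (hu : IntegrableOn u (Set.Ioo e₁ e₂))
    (hu2 : IntegrableOn (fun t => u t ^ 2) (Set.Ioo e₁ e₂)) :
    (∫ t in c..d, u t) ^ 2 ≤ (e₂ - e₁) * ∫ t in Set.Ioo e₁ e₂, u t ^ 2 := by
  rw [sq_intervalIntegral_minmax]
  set c' := min c d with hc'
  set d' := max c d with hd'
  have hc'm : c' ∈ Set.Ioo e₁ e₂ := by
    rcases min_cases c d with ⟨h, _⟩ | ⟨h, _⟩ <;> rw [hc', h] <;> assumption
  have hd'm : d' ∈ Set.Ioo e₁ e₂ := by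
    rcases max_cases c d with ⟨h, _⟩ | ⟨h, _⟩ <;> rw [hd', h] <;> assumption
  have hsub : Set.Ioc c' d' ⊆ Set.Ioo e₁ e₂ := fun t ht =>
    ⟨lt_trans hc'm.1 ht.1, lt_of_le_of_lt ht.2 hd'm.2⟩
  rw [intervalIntegral.integral_of_le (min_le_max)]
  have hfin : volume (Set.Ioc c' d') ≠ ⊤ := by
    rw [Real.volume_Ioc]; exact ENNReal.ofReal_ne_top
  have hcs := cs_set (Set.Ioc c' d') hfin u (hu.mono_set hsub) (hu2.mono_set hsub)
  have hvol : (volume (Set.Ioc c' d')).toReal = d' - c' := by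
    rw [Real.volume_Ioc, ENNReal.toReal_ofReal (by linarith [min_le_max (a := c) (b := d)])]
  rw [hvol] at hcs
  have hmono : ∫ t in Set.Ioc c' d', u t ^ 2 ≤ ∫ t in Set.Ioo e₁ e₂, u t ^ 2 :=
    setIntegral_mono_set hu2 (ae_of_all _ fun t => sq_nonneg _) (HasSubset.Subset.eventuallyLE hsub)
  have h1 : (0:ℝ) ≤ ∫ t in Set.Ioc c' d', u t ^ 2 := integral_nonneg fun t => sq_nonneg _
  have h2 : d' - c' ≤ e₂ - e₁ := by
    have := hc'm.1; have := hd'm.2; linarith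
  calc (∫ t in Set.Ioc c' d', u t) ^ 2 ≤ (d' - c') * ∫ t in Set.Ioc c' d', u t ^ 2 := hcs
    _ ≤ (e₂ - e₁) * ∫ t in Set.Ioo e₁ e₂, u t ^ 2 := by
        apply mul_le_mul h2 hmono h1 (by linarith [hc'm.1, hd'm.2, hc'm.2])

lemma four_sq (a b c d : ℝ) : (a + b + c + d) ^ 2 ≤ 4 * (a ^ 2 + b ^ 2 + c ^ 2 + d ^ 2) := by
  nlinarith [sq_nonneg (a - b), sq_nonneg (a - c), sq_nonneg (a - d), sq_nonneg (b - c),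
    sq_nonneg (b - d), sq_nonneg (c - d)]

/-- Pointwise Sobolev-type embedding on a square of sidelength `δ`:
`|f(x)|² ≤ 4 ( δ⁻² ∫ |f|² + ∫ |∇f|² + δ² ∫ |∂₂∂₁ f|² )`. -/
theorem square_sobolev_embedding (a₁ b₁ a₂ b₂ δ : ℝ) (hδ : 0 < δ)
    (h₁ : b₁ - a₁ = δ) (h₂ : b₂ - a₂ = δ) (f : ℝ × ℝ → ℝ)
    (hf : ContDiffOn ℝ 2 f (closure ((Set.Ioo a₁ b₁) ×ˢ (Set.Ioo a₂ b₂))))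
    (x : ℝ × ℝ) (hx : x ∈ (Set.Ioo a₁ b₁) ×ˢ (Set.Ioo a₂ b₂)) :
    |f x| ^ 2 ≤
      4 * ((1 / δ ^ 2) * (∫ y in (Set.Ioo a₁ b₁) ×ˢ (Set.Ioo a₂ b₂), (f y) ^ 2) +
        (∫ y in (Set.Ioo a₁ b₁) ×ˢ (Set.Ioo a₂ b₂),
          ((fderiv ℝ f y (1, 0)) ^ 2 + (fderiv ℝ f y (0, 1)) ^ 2)) +
        δ ^ 2 * (∫ y in (Set.Ioo a₁ b₁) ×ˢ (Set.Ioo a₂ b₂),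
          (fderiv ℝ (fun q => fderiv ℝ f q (1, 0)) y (0, 1)) ^ 2)) := by
  obtain ⟨hx1, hx2⟩ := hx
  have hab1 : a₁ < b₁ := lt_trans hx1.1 hx1.2
  have hab2 : a₂ < b₂ := lt_trans hx2.1 hx2.2
  set A := Set.Ioo a₁ b₁ with hA
  set B := Set.Ioo a₂ b₂ with hB
  set K := Set.Icc a₁ b₁ ×ˢ Set.Icc a₂ b₂ with hK
  have hclos : closure (A ×ˢ B) = K := by
    rw [hA, hB, hK, closure_prod_eq, closure_Ioo hab1.ne, closure_Ioo hab2.ne]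
  rw [hclos] at hf
  -- basic topology
  have hUopen : IsOpen (A ×ˢ B) := isOpen_Ioo.prod isOpen_Ioo
  have hUsub : A ×ˢ B ⊆ K := Set.prod_mono Set.Ioo_subset_Icc_self Set.Ioo_subset_Icc_self
  have hxU : x ∈ A ×ˢ B := ⟨hx1, hx2⟩
  have hKcomp : IsCompact K := (isCompact_Icc).prod (isCompact_Icc)
  have hKuniq : UniqueDiffOn ℝ K :=
    uniqueDiffOn_convex ((convex_Icc _ _).prod (convex_Icc _ _))
      ⟨x, interior_maximal hUsub hUopen hxU⟩
  have hKn : ∀ y ∈ A ×ˢ B, K ∈ nhds y := fun y hy => mem_nhds_iff.mpr ⟨A ×ˢ B, hUsub, hUopen, hy⟩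
  -- smoothness on the open square
  have hfU : ContDiffOn ℝ 2 f (A ×ˢ B) := hf.mono hUsub
  have hF2 : ContDiffOn ℝ 1 (fun y => fderiv ℝ f y) (A ×ˢ B) :=
    hfU.fderiv_of_isOpen hUopen (by norm_num)
  have hd1cd : ContDiffOn ℝ 1 (fun y => fderiv ℝ f y (1, 0)) (A ×ˢ B) :=
    hF2.clm_apply contDiffOn_const
  have hd2cd : ContDiffOn ℝ 1 (fun y => fderiv ℝ f y (0, 1)) (A ×ˢ B) :=
    hF2.clm_apply contDiffOn_const
  have hc_d1 : ContinuousOn (fun y => fderiv ℝ f y (1, 0)) (A ×ˢ B) := hd1cd.continuousOn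
  have hc_d2 : ContinuousOn (fun y => fderiv ℝ f y (0, 1)) (A ×ˢ B) := hd2cd.continuousOn
  have hgc : ContinuousOn (fun y => fderiv ℝ (fun q => fderiv ℝ f q (1, 0)) y (0, 1)) (A ×ˢ B) :=
    (hd1cd.continuousOn_fderiv_of_isOpen hUopen le_rfl).clm_apply continuousOn_const
  have hdiff_f : ∀ y ∈ A ×ˢ B, DifferentiableAt ℝ f y := fun y hy =>
    ((hfU.differentiableOn (by norm_num)) y hy).differentiableAt (hUopen.mem_nhds hy)
  have hd1diff : ∀ y ∈ A ×ˢ B, DifferentiableAt ℝ (fun q => fderiv ℝ f q (1, 0)) y := fun y hy =>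
    ((hd1cd.differentiableOn one_ne_zero) y hy).differentiableAt (hUopen.mem_nhds hy)
  -- uniform bounds
  obtain ⟨C₀, hC₀⟩ := hKcomp.exists_bound_of_continuousOn hf.continuousOn
  have hGK : ContDiffOn ℝ 1 (fderivWithin ℝ f K) K := hf.fderivWithin hKuniq (by norm_num)
  obtain ⟨C₁, hC₁⟩ := hKcomp.exists_bound_of_continuousOn hGK.continuousOn
  obtain ⟨C₂, hC₂⟩ := hKcomp.exists_bound_of_continuousOn
    (hGK.continuousOn_fderivWithin hKuniq le_rfl)
  have hfd_eq : ∀ y ∈ A ×ˢ B, fderiv ℝ f y = fderivWithin ℝ f K y := fun y hy =>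
    (fderivWithin_of_mem_nhds (hKn y hy)).symm
  have hnorm10 : ‖((1 : ℝ), (0 : ℝ))‖ = 1 := by
    rw [Prod.norm_def]; norm_num
  have hnorm01 : ‖((0 : ℝ), (1 : ℝ))‖ = 1 := by
    rw [Prod.norm_def]; norm_num
  have hb1 : ∀ y ∈ A ×ˢ B, |fderiv ℝ f y (1, 0)| ≤ C₁ := by
    intro y hy
    rw [hfd_eq y hy, ← Real.norm_eq_abs]
    calc ‖fderivWithin ℝ f K y (1, 0)‖ ≤ ‖fderivWithin ℝ f K y‖ * ‖((1 : ℝ), (0 : ℝ))‖ :=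
          (fderivWithin ℝ f K y).le_opNorm _
      _ ≤ C₁ := by rw [hnorm10, mul_one]; exact hC₁ y (hUsub hy)
  have hb2 : ∀ y ∈ A ×ˢ B, |fderiv ℝ f y (0, 1)| ≤ C₁ := by
    intro y hy
    rw [hfd_eq y hy, ← Real.norm_eq_abs]
    calc ‖fderivWithin ℝ f K y (0, 1)‖ ≤ ‖fderivWithin ℝ f K y‖ * ‖((0 : ℝ), (1 : ℝ))‖ :=
          (fderivWithin ℝ f K y).le_opNorm _
      _ ≤ C₁ := by rw [hnorm01, mul_one]; exact hC₁ y (hUsub hy)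
  have hgval : ∀ y ∈ A ×ˢ B, fderiv ℝ (fun q => fderiv ℝ f q (1, 0)) y (0, 1)
      = (fderivWithin ℝ (fderivWithin ℝ f K) K y (0, 1)) (1, 0) := by
    intro y hy
    have hev : (fun q => fderiv ℝ f q (1, 0))
        =ᶠ[nhds y] (fun z => fderivWithin ℝ f K z (1, 0)) := by
      filter_upwards [hUopen.mem_nhds hy] with z hz
      rw [hfd_eq z hz]
    rw [hev.fderiv_eq]
    have hGdiff : DifferentiableAt ℝ (fderivWithin ℝ f K) y :=
      ((hGK.differentiableOn one_ne_zero) y (hUsub hy)).differentiableAt (hKn y hy)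
    have hcomp := fderiv_comp (𝕜 := ℝ)
      (g := (ContinuousLinearMap.apply ℝ ℝ ((1 : ℝ), (0 : ℝ)) :
        ((ℝ × ℝ) →L[ℝ] ℝ) →L[ℝ] ℝ)) (f := fderivWithin ℝ f K) y
      ((ContinuousLinearMap.apply ℝ ℝ ((1 : ℝ), (0 : ℝ))).differentiableAt) hGdiff
    rw [ContinuousLinearMap.fderiv] at hcomp
    have hfd2 : fderiv ℝ (fderivWithin ℝ f K) y = fderivWithin ℝ (fderivWithin ℝ f K) K y :=
      (fderivWithin_of_mem_nhds (hKn y hy)).symm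
    have : fderiv ℝ (fun z => fderivWithin ℝ f K z (1, 0)) y
        = (ContinuousLinearMap.apply ℝ ℝ ((1 : ℝ), (0 : ℝ))).comp
            (fderiv ℝ (fderivWithin ℝ f K) y) := hcomp
    rw [this, hfd2]
    rfl
  have hbg : ∀ y ∈ A ×ˢ B, |fderiv ℝ (fun q => fderiv ℝ f q (1, 0)) y (0, 1)| ≤ C₂ := by
    intro y hy
    rw [hgval y hy, ← Real.norm_eq_abs]
    calc ‖(fderivWithin ℝ (fderivWithin ℝ f K) K y (0, 1)) (1, 0)‖
        ≤ ‖fderivWithin ℝ (fderivWithin ℝ f K) K y (0, 1)‖ * ‖((1 : ℝ), (0 : ℝ))‖ :=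
          ContinuousLinearMap.le_opNorm _ _
      _ ≤ (‖fderivWithin ℝ (fderivWithin ℝ f K) K y‖ * ‖((0 : ℝ), (1 : ℝ))‖) * 1 := by
          rw [hnorm10]
          exact mul_le_mul_of_nonneg_right
            (ContinuousLinearMap.le_opNorm _ _) (by norm_num)
      _ ≤ C₂ := by rw [hnorm01]; simpa using hC₂ y (hUsub hy)
  -- measure infrastructure
  have hAmeas : MeasurableSet A := measurableSet_Ioo
  have hBmeas : MeasurableSet B := measurableSet_Ioo
  have hUmeas : MeasurableSet (A ×ˢ B) := hAmeas.prod hBmeas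
  have hvolA : volume A = ENNReal.ofReal δ := by rw [hA, Real.volume_Ioo, h₁]
  have hvolB : volume B = ENNReal.ofReal δ := by rw [hB, Real.volume_Ioo, h₂]
  have hvolU : volume (A ×ˢ B) = ENNReal.ofReal δ * ENNReal.ofReal δ := by
    rw [MeasureTheory.Measure.volume_eq_prod, MeasureTheory.Measure.prod_prod, hvolA, hvolB]
  have hUfin : volume (A ×ˢ B) ≠ ⊤ := by
    rw [hvolU]; exact ENNReal.mul_ne_top ENNReal.ofReal_ne_top ENNReal.ofReal_ne_top
  have hAfin : volume A ≠ ⊤ := by rw [hvolA]; exact ENNReal.ofReal_ne_top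
  have hBfin : volume B ≠ ⊤ := by rw [hvolB]; exact ENNReal.ofReal_ne_top
  have hUvolR : (volume (A ×ˢ B)).toReal = δ * δ := by
    rw [hvolU, ENNReal.toReal_mul, ENNReal.toReal_ofReal hδ.le]
  have hρ : (volume : Measure (ℝ × ℝ)).restrict (A ×ˢ B)
      = (volume.restrict A).prod (volume.restrict B) := by
    rw [MeasureTheory.Measure.volume_eq_prod, ← MeasureTheory.Measure.prod_restrict]
  haveI hfinA : IsFiniteMeasure (volume.restrict A) :=
    ⟨by rw [Measure.restrict_apply_univ, hvolA]; exact ENNReal.ofReal_lt_top⟩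
  haveI hfinB : IsFiniteMeasure (volume.restrict B) :=
    ⟨by rw [Measure.restrict_apply_univ, hvolB]; exact ENNReal.ofReal_lt_top⟩
  have hrAuniv : ((volume.restrict A) Set.univ).toReal = δ := by
    rw [Measure.restrict_apply_univ, hvolA, ENNReal.toReal_ofReal hδ.le]
  have hrBuniv : ((volume.restrict B) Set.univ).toReal = δ := by
    rw [Measure.restrict_apply_univ, hvolB, ENNReal.toReal_ofReal hδ.le]
  -- measurability of derivatives
  have hmd1 : Measurable (fun y : ℝ × ℝ => fderiv ℝ f y (1, 0)) :=
    measurable_fderiv_apply_const ℝ f _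
  have hmd2 : Measurable (fun y : ℝ × ℝ => fderiv ℝ f y (0, 1)) :=
    measurable_fderiv_apply_const ℝ f _
  have hmg : Measurable (fun y : ℝ × ℝ => fderiv ℝ (fun q => fderiv ℝ f q (1, 0)) y (0, 1)) :=
    measurable_fderiv_apply_const ℝ (fun q => fderiv ℝ f q (1, 0)) _
  -- integrability over the square
  have habs_sq : ∀ (u C : ℝ), |u| ≤ C → |u ^ 2| ≤ C ^ 2 := by
    intro u C h
    rw [abs_pow]
    exact pow_le_pow_left₀ (abs_nonneg u) h 2
  have hIf2 : IntegrableOn (fun y => f y ^ 2) (A ×ˢ B) := by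
    apply integrableOn_of_bdd hUmeas hUfin
      (((hf.continuousOn.mono hUsub).pow 2).aestronglyMeasurable hUmeas)
      (C := C₀ ^ 2)
    intro y hy
    exact habs_sq _ _ (by rw [← Real.norm_eq_abs]; exact hC₀ y (hUsub hy))
  have hId12 : IntegrableOn (fun y => (fderiv ℝ f y (1, 0)) ^ 2) (A ×ˢ B) := by
    apply integrableOn_of_bdd hUmeas hUfin ((hmd1.pow_const 2).aestronglyMeasurable) (C := C₁ ^ 2)
    intro y hy; exact habs_sq _ _ (hb1 y hy)
  have hId22 : IntegrableOn (fun y => (fderiv ℝ f y (0, 1)) ^ 2) (A ×ˢ B) := by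
    apply integrableOn_of_bdd hUmeas hUfin ((hmd2.pow_const 2).aestronglyMeasurable) (C := C₁ ^ 2)
    intro y hy; exact habs_sq _ _ (hb2 y hy)
  have hIg2 : IntegrableOn
      (fun y => (fderiv ℝ (fun q => fderiv ℝ f q (1, 0)) y (0, 1)) ^ 2) (A ×ˢ B) := by
    apply integrableOn_of_bdd hUmeas hUfin ((hmg.pow_const 2).aestronglyMeasurable) (C := C₂ ^ 2)
    intro y hy; exact habs_sq _ _ (hbg y hy)
  -- slice integrability
  have hslice1 : ∀ s ∈ B, IntegrableOn (fun t => (fderiv ℝ f (t, s) (1, 0)) ^ 2) A := by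
    intro s hs
    apply integrableOn_of_bdd hAmeas hAfin
      (((hmd1.comp (measurable_id.prodMk measurable_const)).pow_const 2).aestronglyMeasurable)
      (C := C₁ ^ 2)
    intro t ht; exact habs_sq _ _ (hb1 (t, s) ⟨ht, hs⟩)
  have hslice2 : ∀ t ∈ A, IntegrableOn (fun s => (fderiv ℝ f (t, s) (0, 1)) ^ 2) B := by
    intro t ht
    apply integrableOn_of_bdd hBmeas hBfin
      (((hmd2.comp (measurable_const.prodMk measurable_id)).pow_const 2).aestronglyMeasurable)
      (C := C₁ ^ 2)
    intro s hs; exact habs_sq _ _ (hb2 (t, s) ⟨ht, hs⟩)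
  have hslice3 : ∀ t ∈ A, IntegrableOn
      (fun s => (fderiv ℝ (fun q => fderiv ℝ f q (1, 0)) (t, s) (0, 1)) ^ 2) B := by
    intro t ht
    apply integrableOn_of_bdd hBmeas hBfin
      (((hmg.comp (measurable_const.prodMk measurable_id)).pow_const 2).aestronglyMeasurable)
      (C := C₂ ^ 2)
    intro s hs; exact habs_sq _ _ (hbg (t, s) ⟨ht, hs⟩)
  have hslice1' : ∀ s ∈ B, IntegrableOn (fun t => fderiv ℝ f (t, s) (1, 0)) A := by
    intro s hs
    apply integrableOn_of_bdd hAmeas hAfin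
      ((hmd1.comp (measurable_id.prodMk measurable_const)).aestronglyMeasurable) (C := C₁)
    intro t ht; exact hb1 (t, s) ⟨ht, hs⟩
  have hslice2' : ∀ t ∈ A, IntegrableOn (fun s => fderiv ℝ f (t, s) (0, 1)) B := by
    intro t ht
    apply integrableOn_of_bdd hBmeas hBfin
      ((hmd2.comp (measurable_const.prodMk measurable_id)).aestronglyMeasurable) (C := C₁)
    intro s hs; exact hb2 (t, s) ⟨ht, hs⟩
  have hslice3' : ∀ t ∈ A, IntegrableOn
      (fun s => fderiv ℝ (fun q => fderiv ℝ f q (1, 0)) (t, s) (0, 1)) B := by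
    intro t ht
    apply integrableOn_of_bdd hBmeas hBfin
      ((hmg.comp (measurable_const.prodMk measurable_id)).aestronglyMeasurable) (C := C₂)
    intro s hs; exact hbg (t, s) ⟨ht, hs⟩
  -- the Ψ functions
  set Ψ₁ : ℝ → ℝ := fun s => ∫ t in A, (fderiv ℝ f (t, s) (1, 0)) ^ 2 with hΨ₁def
  set Ψ₂ : ℝ → ℝ := fun t => ∫ s in B, (fderiv ℝ f (t, s) (0, 1)) ^ 2 with hΨ₂def
  set Ψ₃ : ℝ → ℝ := fun t =>
    ∫ s in B, (fderiv ℝ (fun q => fderiv ℝ f q (1, 0)) (t, s) (0, 1)) ^ 2 with hΨ₃def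
  have hΨ₁m : StronglyMeasurable Ψ₁ := by
    apply MeasureTheory.StronglyMeasurable.integral_prod_right'
      (f := fun z : ℝ × ℝ => (fderiv ℝ f (z.2, z.1) (1, 0)) ^ 2)
    exact ((hmd1.comp measurable_swap).pow_const 2).stronglyMeasurable
  have hΨ₂m : StronglyMeasurable Ψ₂ := by
    apply MeasureTheory.StronglyMeasurable.integral_prod_right'
      (f := fun z : ℝ × ℝ => (fderiv ℝ f (z.1, z.2) (0, 1)) ^ 2)
    exact (hmd2.pow_const 2).stronglyMeasurable
  have hΨ₃m : StronglyMeasurable Ψ₃ := by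
    apply MeasureTheory.StronglyMeasurable.integral_prod_right'
      (f := fun z : ℝ × ℝ => (fderiv ℝ (fun q => fderiv ℝ f q (1, 0)) (z.1, z.2) (0, 1)) ^ 2)
    exact (hmg.pow_const 2).stronglyMeasurable
  -- nonnegativity and bounds of Ψ
  have hΨ₁nn : ∀ s, 0 ≤ Ψ₁ s := fun s => integral_nonneg fun t => sq_nonneg _
  have hΨ₂nn : ∀ t, 0 ≤ Ψ₂ t := fun t => integral_nonneg fun s => sq_nonneg _
  have hΨ₃nn : ∀ t, 0 ≤ Ψ₃ t := fun t => integral_nonneg fun s => sq_nonneg _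
  have hΨ₁b : ∀ s ∈ B, Ψ₁ s ≤ δ * C₁ ^ 2 := by
    intro s hs
    have : Ψ₁ s ≤ ∫ _t in A, C₁ ^ 2 := by
      apply setIntegral_mono_on (hslice1 s hs)
        (integrableOn_const hAfin) hAmeas
      intro t ht
      exact (le_abs_self _).trans (habs_sq _ _ (hb1 (t, s) ⟨ht, hs⟩))
    calc Ψ₁ s ≤ ∫ _t in A, C₁ ^ 2 := this
      _ = δ * C₁ ^ 2 := by
          rw [setIntegral_const, measureReal_def, hvolA, ENNReal.toReal_ofReal hδ.le, smul_eq_mul]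
  have hΨ₂b : ∀ t ∈ A, Ψ₂ t ≤ δ * C₁ ^ 2 := by
    intro t ht
    have : Ψ₂ t ≤ ∫ _s in B, C₁ ^ 2 := by
      apply setIntegral_mono_on (hslice2 t ht)
        (integrableOn_const hBfin) hBmeas
      intro s hs
      exact (le_abs_self _).trans (habs_sq _ _ (hb2 (t, s) ⟨ht, hs⟩))
    calc Ψ₂ t ≤ ∫ _s in B, C₁ ^ 2 := this
      _ = δ * C₁ ^ 2 := by
          rw [setIntegral_const, measureReal_def, hvolB, ENNReal.toReal_ofReal hδ.le, smul_eq_mul]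
  have hΨ₃b : ∀ t ∈ A, Ψ₃ t ≤ δ * C₂ ^ 2 := by
    intro t ht
    have : Ψ₃ t ≤ ∫ _s in B, C₂ ^ 2 := by
      apply setIntegral_mono_on (hslice3 t ht)
        (integrableOn_const hBfin) hBmeas
      intro s hs
      exact (le_abs_self _).trans (habs_sq _ _ (hbg (t, s) ⟨ht, hs⟩))
    calc Ψ₃ t ≤ ∫ _s in B, C₂ ^ 2 := this
      _ = δ * C₂ ^ 2 := by
          rw [setIntegral_const, measureReal_def, hvolB, ENNReal.toReal_ofReal hδ.le, smul_eq_mul]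
  -- integrability of Ψ's over sets
  have hIΨ₁U : IntegrableOn (fun y : ℝ × ℝ => Ψ₁ y.2) (A ×ˢ B) := by
    apply integrableOn_of_bdd hUmeas hUfin
      ((hΨ₁m.measurable.comp measurable_snd).aestronglyMeasurable) (C := δ * C₁ ^ 2)
    intro y hy
    show |Ψ₁ y.2| ≤ _
    rw [abs_of_nonneg (hΨ₁nn _)]
    exact hΨ₁b y.2 hy.2
  have hIΨ₂U : IntegrableOn (fun y : ℝ × ℝ => Ψ₂ y.1) (A ×ˢ B) := by
    apply integrableOn_of_bdd hUmeas hUfin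
      ((hΨ₂m.measurable.comp measurable_fst).aestronglyMeasurable) (C := δ * C₁ ^ 2)
    intro y hy
    show |Ψ₂ y.1| ≤ _
    rw [abs_of_nonneg (hΨ₂nn _)]
    exact hΨ₂b y.1 hy.1
  have hIΨ₃A : IntegrableOn Ψ₃ A := by
    apply integrableOn_of_bdd hAmeas hAfin (hΨ₃m.measurable.aestronglyMeasurable)
      (C := δ * C₂ ^ 2)
    intro t ht
    show |Ψ₃ t| ≤ _
    rw [abs_of_nonneg (hΨ₃nn _)]
    exact hΨ₃b t ht
  -- FTC along lines
  have huIccA : ∀ {c d : ℝ}, c ∈ A → d ∈ A → Set.uIcc c d ⊆ A := fun hc hd =>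
    Set.ordConnected_Ioo.uIcc_subset hc hd
  have huIccB : ∀ {c d : ℝ}, c ∈ B → d ∈ B → Set.uIcc c d ⊆ B := fun hc hd =>
    Set.ordConnected_Ioo.uIcc_subset hc hd
  have hcont_h1 : ∀ s ∈ B, ∀ {c d : ℝ}, c ∈ A → d ∈ A →
      IntervalIntegrable (fun t => fderiv ℝ f (t, s) (1, 0)) volume c d := by
    intro s hs c d hc hd
    apply ContinuousOn.intervalIntegrable
    apply hc_d1.comp ((continuous_id.prodMk continuous_const).continuousOn)
    intro t ht
    exact ⟨huIccA hc hd ht, hs⟩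
  have hcont_v2 : ∀ t ∈ A, ∀ {c d : ℝ}, c ∈ B → d ∈ B →
      IntervalIntegrable (fun s => fderiv ℝ f (t, s) (0, 1)) volume c d := by
    intro t ht c d hc hd
    apply ContinuousOn.intervalIntegrable
    apply hc_d2.comp ((continuous_const.prodMk continuous_id).continuousOn)
    intro s hs
    exact ⟨ht, huIccB hc hd hs⟩
  have hcont_vg : ∀ t ∈ A, ∀ {c d : ℝ}, c ∈ B → d ∈ B →
      IntervalIntegrable
        (fun s => fderiv ℝ (fun q => fderiv ℝ f q (1, 0)) (t, s) (0, 1)) volume c d := by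
    intro t ht c d hc hd
    apply ContinuousOn.intervalIntegrable
    apply hgc.comp ((continuous_const.prodMk continuous_id).continuousOn)
    intro s hs
    exact ⟨ht, huIccB hc hd hs⟩
  have hFTC_H : ∀ s ∈ B, ∀ c ∈ A, ∀ d ∈ A,
      (∫ t in c..d, fderiv ℝ f (t, s) (1, 0)) = f (d, s) - f (c, s) := by
    intro s hs c hc d hd
    apply intervalIntegral.integral_eq_sub_of_hasDerivAt
    · intro t ht
      have hmem : (t, s) ∈ A ×ˢ B := ⟨huIccA hc hd ht, hs⟩
      have hline : HasDerivAt (fun t : ℝ => (t, s)) ((1 : ℝ), (0 : ℝ)) t :=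
        (hasDerivAt_id t).prodMk (hasDerivAt_const t s)
      exact (hdiff_f _ hmem).hasFDerivAt.comp_hasDerivAt t hline
    · exact hcont_h1 s hs hc hd
  have hFTC_V : ∀ t ∈ A, ∀ c ∈ B, ∀ d ∈ B,
      (∫ s in c..d, fderiv ℝ f (t, s) (0, 1)) = f (t, d) - f (t, c) := by
    intro t ht c hc d hd
    apply intervalIntegral.integral_eq_sub_of_hasDerivAt
    · intro s hs
      have hmem : (t, s) ∈ A ×ˢ B := ⟨ht, huIccB hc hd hs⟩
      have hline : HasDerivAt (fun s : ℝ => (t, s)) ((0 : ℝ), (1 : ℝ)) s :=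
        (hasDerivAt_const s t).prodMk (hasDerivAt_id s)
      exact (hdiff_f _ hmem).hasFDerivAt.comp_hasDerivAt s hline
    · exact hcont_v2 t ht hc hd
  have hFTC_Vg : ∀ t ∈ A, ∀ c ∈ B, ∀ d ∈ B,
      (∫ s in c..d, fderiv ℝ (fun q => fderiv ℝ f q (1, 0)) (t, s) (0, 1))
        = fderiv ℝ f (t, d) (1, 0) - fderiv ℝ f (t, c) (1, 0) := by
    intro t ht c hc d hd
    apply intervalIntegral.integral_eq_sub_of_hasDerivAt
    · intro s hs
      have hmem : (t, s) ∈ A ×ˢ B := ⟨ht, huIccB hc hd hs⟩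
      have hline : HasDerivAt (fun s : ℝ => (t, s)) ((0 : ℝ), (1 : ℝ)) s :=
        (hasDerivAt_const s t).prodMk (hasDerivAt_id s)
      exact (hd1diff _ hmem).hasFDerivAt.comp_hasDerivAt s hline
    · exact hcont_vg t ht hc hd
  -- the pointwise identity
  have hident : ∀ y ∈ A ×ˢ B, f x
      = f y + (∫ t in y.1..x.1, fderiv ℝ f (t, y.2) (1, 0))
        + (∫ s in y.2..x.2, fderiv ℝ f (y.1, s) (0, 1))
        + (∫ t in y.1..x.1,
            ∫ s in y.2..x.2, fderiv ℝ (fun q => fderiv ℝ f q (1, 0)) (t, s) (0, 1)) := by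
    rintro ⟨y₁, y₂⟩ ⟨hy1, hy2⟩
    have h1 := hFTC_H y₂ hy2 y₁ hy1 x.1 hx1
    have h2 := hFTC_V y₁ hy1 y₂ hy2 x.2 hx2
    have h3 : (∫ t in y₁..x.1,
          ∫ s in y₂..x.2, fderiv ℝ (fun q => fderiv ℝ f q (1, 0)) (t, s) (0, 1))
        = ∫ t in y₁..x.1, (fderiv ℝ f (t, x.2) (1, 0) - fderiv ℝ f (t, y₂) (1, 0)) := by
      apply intervalIntegral.integral_congr
      intro t ht
      exact hFTC_Vg t (huIccA hy1 hx1 ht) y₂ hy2 x.2 hx2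
    have h4 := hFTC_H x.2 hx2 y₁ hy1 x.1 hx1
    have h5 := hFTC_H y₂ hy2 y₁ hy1 x.1 hx1
    have h6 : (∫ t in y₁..x.1, (fderiv ℝ f (t, x.2) (1, 0) - fderiv ℝ f (t, y₂) (1, 0)))
        = (∫ t in y₁..x.1, fderiv ℝ f (t, x.2) (1, 0))
          - ∫ t in y₁..x.1, fderiv ℝ f (t, y₂) (1, 0) :=
      intervalIntegral.integral_sub (hcont_h1 x.2 hx2 hy1 hx1) (hcont_h1 y₂ hy2 hy1 hx1)
    have hxeta : (x.1, x.2) = x := rfl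
    simp only [h3, h6, h4, h5, h1, h2, hxeta]
    ring
  have hC₂0 : 0 ≤ C₂ := le_trans (norm_nonneg _) (hC₂ x (hUsub hxU))
  set J₃ : ℝ := ∫ t in A, Ψ₃ t with hJ₃def
  -- the key pointwise bound
  have hkey : ∀ y ∈ A ×ˢ B,
      (f x) ^ 2 ≤ 4 * ((f y) ^ 2 + δ * Ψ₁ y.2 + δ * Ψ₂ y.1 + δ ^ 2 * J₃) := by
    rintro ⟨y₁, y₂⟩ ⟨hy1, hy2⟩
    have T1sq : (∫ t in y₁..x.1, fderiv ℝ f (t, y₂) (1, 0)) ^ 2 ≤ δ * Ψ₁ y₂ := by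
      have h := cs_interval (e₁ := a₁) (e₂ := b₁) hy1 hx1
        (fun t => fderiv ℝ f (t, y₂) (1, 0)) (hslice1' y₂ hy2) (hslice1 y₂ hy2)
      rw [h₁] at h
      exact h
    have T2sq : (∫ s in y₂..x.2, fderiv ℝ f (y₁, s) (0, 1)) ^ 2 ≤ δ * Ψ₂ y₁ := by
      have h := cs_interval (e₁ := a₂) (e₂ := b₂) hy2 hx2
        (fun s => fderiv ℝ f (y₁, s) (0, 1)) (hslice2' y₁ hy1) (hslice2 y₁ hy1)
      rw [h₂] at h
      exact h
    -- the mixed term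
    set W : ℝ → ℝ := fun t =>
      ∫ s in y₂..x.2, fderiv ℝ (fun q => fderiv ℝ f q (1, 0)) (t, s) (0, 1) with hWdef
    have hWm : Measurable W := by
      have e : W = fun t =>
          (∫ s in Set.Ioc y₂ x.2, fderiv ℝ (fun q => fderiv ℝ f q (1, 0)) (t, s) (0, 1))
          - ∫ s in Set.Ioc x.2 y₂, fderiv ℝ (fun q => fderiv ℝ f q (1, 0)) (t, s) (0, 1) := rfl
      rw [e]
      have m1 : StronglyMeasurable (fun t =>
          ∫ s in Set.Ioc y₂ x.2, fderiv ℝ (fun q => fderiv ℝ f q (1, 0)) (t, s) (0, 1)) :=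
        MeasureTheory.StronglyMeasurable.integral_prod_right'
          (f := fun z : ℝ × ℝ => fderiv ℝ (fun q => fderiv ℝ f q (1, 0)) (z.1, z.2) (0, 1))
          hmg.stronglyMeasurable
      have m2 : StronglyMeasurable (fun t =>
          ∫ s in Set.Ioc x.2 y₂, fderiv ℝ (fun q => fderiv ℝ f q (1, 0)) (t, s) (0, 1)) :=
        MeasureTheory.StronglyMeasurable.integral_prod_right'
          (f := fun z : ℝ × ℝ => fderiv ℝ (fun q => fderiv ℝ f q (1, 0)) (z.1, z.2) (0, 1))
          hmg.stronglyMeasurable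
      exact (m1.measurable.sub m2.measurable)
    have hdist : |x.2 - y₂| ≤ δ := by
      rw [← h₂, abs_le]
      constructor
      · have := hx2.1; have := hy2.2; linarith
      · have := hx2.2; have := hy2.1; linarith
    have hWb : ∀ t ∈ A, |W t| ≤ C₂ * δ := by
      intro t ht
      have hb : ∀ s ∈ Set.uIoc y₂ x.2,
          ‖fderiv ℝ (fun q => fderiv ℝ f q (1, 0)) (t, s) (0, 1)‖ ≤ C₂ := by
        intro s hs
        have hsB : s ∈ B := huIccB hy2 hx2 (Set.uIoc_subset_uIcc hs)
        rw [Real.norm_eq_abs]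
        exact hbg (t, s) ⟨ht, hsB⟩
      calc |W t| ≤ C₂ * |x.2 - y₂| := by
            rw [← Real.norm_eq_abs (W t)]
            exact intervalIntegral.norm_integral_le_of_norm_le_const hb
        _ ≤ C₂ * δ := mul_le_mul_of_nonneg_left hdist hC₂0
    have hWint : IntegrableOn W A :=
      integrableOn_of_bdd hAmeas hAfin hWm.aestronglyMeasurable hWb
    have hW2int : IntegrableOn (fun t => W t ^ 2) A := by
      apply integrableOn_of_bdd hAmeas hAfin
        ((hWm.pow_const 2).aestronglyMeasurable) (C := (C₂ * δ) ^ 2)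
      intro t ht
      exact habs_sq _ _ (hWb t ht)
    have hW2le : ∀ t ∈ A, W t ^ 2 ≤ δ * Ψ₃ t := by
      intro t ht
      have h := cs_interval (e₁ := a₂) (e₂ := b₂) hy2 hx2
        (fun s => fderiv ℝ (fun q => fderiv ℝ f q (1, 0)) (t, s) (0, 1))
        (hslice3' t ht) (hslice3 t ht)
      rw [h₂] at h
      exact h
    have T3sq : (∫ t in y₁..x.1, W t) ^ 2 ≤ δ ^ 2 * J₃ := by
      have h := cs_interval (e₁ := a₁) (e₂ := b₁) hy1 hx1 W hWint hW2int
      rw [h₁] at h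
      have hmono : (∫ t in A, W t ^ 2) ≤ ∫ t in A, δ * Ψ₃ t :=
        setIntegral_mono_on hW2int (hIΨ₃A.const_mul δ) hAmeas hW2le
      have hJ : (∫ t in A, δ * Ψ₃ t) = δ * J₃ := by
        rw [hJ₃def]; exact MeasureTheory.integral_const_mul δ _
      calc (∫ t in y₁..x.1, W t) ^ 2 ≤ δ * ∫ t in A, W t ^ 2 := h
        _ ≤ δ * (δ * J₃) := by
            rw [← hJ]
            exact mul_le_mul_of_nonneg_left hmono hδ.le
        _ = δ ^ 2 * J₃ := by ring
    have hsum := hident (y₁, y₂) ⟨hy1, hy2⟩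
    have h4 := four_sq (f (y₁, y₂))
      (∫ t in y₁..x.1, fderiv ℝ f (t, y₂) (1, 0))
      (∫ s in y₂..x.2, fderiv ℝ f (y₁, s) (0, 1))
      (∫ t in y₁..x.1, W t)
    rw [← hsum] at h4
    have hfy : ((y₁, y₂) : ℝ × ℝ).1 = y₁ := rfl
    linarith [T1sq, T2sq, T3sq, h4]
  -- integrate the key bound over the square
  have hconstI : IntegrableOn (fun _ : ℝ × ℝ => (f x) ^ 2) (A ×ˢ B) :=
    integrableOn_const hUfin
  have hJconstI : IntegrableOn (fun _ : ℝ × ℝ => δ ^ 2 * J₃) (A ×ˢ B) :=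
    integrableOn_const hUfin
  have hRint0 : IntegrableOn
      (fun y => (f y) ^ 2 + δ * Ψ₁ y.2 + δ * Ψ₂ y.1 + δ ^ 2 * J₃) (A ×ˢ B) :=
    ((hIf2.add (hIΨ₁U.const_mul δ)).add (hIΨ₂U.const_mul δ)).add hJconstI
  have hRint : IntegrableOn
      (fun y => 4 * ((f y) ^ 2 + δ * Ψ₁ y.2 + δ * Ψ₂ y.1 + δ ^ 2 * J₃)) (A ×ˢ B) :=
    hRint0.const_mul 4
  have hmono := setIntegral_mono_on hconstI hRint hUmeas hkey
  have hLHS : (∫ _y in A ×ˢ B, (f x) ^ 2) = (δ * δ) * (f x) ^ 2 := by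
    rw [setIntegral_const, measureReal_def, hUvolR, smul_eq_mul]
  -- Fubini identities
  have hIΨ₁ρ : Integrable (fun z : ℝ × ℝ => Ψ₁ z.2) ((volume.restrict A).prod (volume.restrict B)) := by rw [← hρ]; exact hIΨ₁U
  have hIΨ₂ρ : Integrable (fun z : ℝ × ℝ => Ψ₂ z.1) ((volume.restrict A).prod (volume.restrict B)) := by rw [← hρ]; exact hIΨ₂U
  have hID1ρ : Integrable (fun z : ℝ × ℝ => (fderiv ℝ f z (1, 0)) ^ 2) ((volume.restrict A).prod (volume.restrict B)) := by
    rw [← hρ]; exact hId12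
  have hID2ρ : Integrable (fun z : ℝ × ℝ => (fderiv ℝ f z (0, 1)) ^ 2) ((volume.restrict A).prod (volume.restrict B)) := by
    rw [← hρ]; exact hId22
  have hIgρ : Integrable
      (fun z : ℝ × ℝ => (fderiv ℝ (fun q => fderiv ℝ f q (1, 0)) z (0, 1)) ^ 2) ((volume.restrict A).prod (volume.restrict B)) := by
    rw [← hρ]; exact hIg2
  have hfub1 : (∫ y in A ×ˢ B, Ψ₁ y.2)
      = δ * ∫ y in A ×ˢ B, (fderiv ℝ f y (1, 0)) ^ 2 := by
    have e1 : (∫ y in A ×ˢ B, Ψ₁ y.2) = ∫ z, Ψ₁ z.2 ∂((volume.restrict A).prod (volume.restrict B)) := by rw [← hρ]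
    have e2 : (∫ s in B, Ψ₁ s)
        = ∫ y in A ×ˢ B, (fderiv ℝ f y (1, 0)) ^ 2 := by
      have e3 := MeasureTheory.integral_prod_symm
        (f := fun z : ℝ × ℝ => (fderiv ℝ f z (1, 0)) ^ 2) hID1ρ
      rw [← hρ] at e3
      exact e3.symm
    rw [e1, MeasureTheory.integral_fun_snd, measureReal_def, hrAuniv, smul_eq_mul, e2]
  have hfub2 : (∫ y in A ×ˢ B, Ψ₂ y.1)
      = δ * ∫ y in A ×ˢ B, (fderiv ℝ f y (0, 1)) ^ 2 := by
    have e1 : (∫ y in A ×ˢ B, Ψ₂ y.1) = ∫ z, Ψ₂ z.1 ∂((volume.restrict A).prod (volume.restrict B)) := by rw [← hρ]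
    have e2 : (∫ t in A, Ψ₂ t)
        = ∫ y in A ×ˢ B, (fderiv ℝ f y (0, 1)) ^ 2 := by
      have e3 := MeasureTheory.integral_prod
        (f := fun z : ℝ × ℝ => (fderiv ℝ f z (0, 1)) ^ 2) hID2ρ
      rw [← hρ] at e3
      exact e3.symm
    rw [e1, MeasureTheory.integral_fun_fst, measureReal_def, hrBuniv, smul_eq_mul, e2]
  have hJ₃eq : J₃ = ∫ y in A ×ˢ B,
      (fderiv ℝ (fun q => fderiv ℝ f q (1, 0)) y (0, 1)) ^ 2 := by
    have e3 := MeasureTheory.integral_prod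
      (f := fun z : ℝ × ℝ => (fderiv ℝ (fun q => fderiv ℝ f q (1, 0)) z (0, 1)) ^ 2) hIgρ
    rw [← hρ] at e3
    exact e3.symm
  -- compute the integral of the right-hand side
  have hRcalc : (∫ y in A ×ˢ B, 4 * ((f y) ^ 2 + δ * Ψ₁ y.2 + δ * Ψ₂ y.1 + δ ^ 2 * J₃))
      = 4 * ((∫ y in A ×ˢ B, (f y) ^ 2)
        + δ * (δ * ∫ y in A ×ˢ B, (fderiv ℝ f y (1, 0)) ^ 2)
        + δ * (δ * ∫ y in A ×ˢ B, (fderiv ℝ f y (0, 1)) ^ 2)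
        + (δ ^ 2 * J₃) * (δ * δ)) := by
    have i12 : IntegrableOn (fun y => (f y) ^ 2 + δ * Ψ₁ y.2) (A ×ˢ B) := by
      have := hIf2.add (hIΨ₁U.const_mul δ); exact this
    have i123 : IntegrableOn (fun y => (f y) ^ 2 + δ * Ψ₁ y.2 + δ * Ψ₂ y.1) (A ×ˢ B) := by
      have := i12.add (hIΨ₂U.const_mul δ); exact this
    rw [MeasureTheory.integral_const_mul]
    rw [integral_add i123 hJconstI]
    rw [integral_add i12 (hIΨ₂U.const_mul δ)]
    rw [integral_add hIf2 (hIΨ₁U.const_mul δ)]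
    rw [MeasureTheory.integral_const_mul, MeasureTheory.integral_const_mul]
    rw [setIntegral_const, measureReal_def, hUvolR, smul_eq_mul, hfub1, hfub2]
    ring
  have hfinal : (δ * δ) * (f x) ^ 2
      ≤ 4 * ((∫ y in A ×ˢ B, (f y) ^ 2)
        + δ * (δ * ∫ y in A ×ˢ B, (fderiv ℝ f y (1, 0)) ^ 2)
        + δ * (δ * ∫ y in A ×ˢ B, (fderiv ℝ f y (0, 1)) ^ 2)
        + (δ ^ 2 * (∫ y in A ×ˢ B,
            (fderiv ℝ (fun q => fderiv ℝ f q (1, 0)) y (0, 1)) ^ 2)) * (δ * δ)) := by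
    rw [← hJ₃eq, ← hRcalc, ← hLHS]
    exact hmono
  have hadd : (∫ y in A ×ˢ B, ((fderiv ℝ f y (1, 0)) ^ 2 + (fderiv ℝ f y (0, 1)) ^ 2))
      = (∫ y in A ×ˢ B, (fderiv ℝ f y (1, 0)) ^ 2)
        + ∫ y in A ×ˢ B, (fderiv ℝ f y (0, 1)) ^ 2 :=
    integral_add hId12 hId22
  rw [sq_abs, hadd]
  have hδδ : (0 : ℝ) < δ * δ := mul_pos hδ hδ
  have hdiv : (f x) ^ 2
      ≤ (4 * ((∫ y in A ×ˢ B, (f y) ^ 2)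
        + δ * (δ * ∫ y in A ×ˢ B, (fderiv ℝ f y (1, 0)) ^ 2)
        + δ * (δ * ∫ y in A ×ˢ B, (fderiv ℝ f y (0, 1)) ^ 2)
        + (δ ^ 2 * (∫ y in A ×ˢ B,
            (fderiv ℝ (fun q => fderiv ℝ f q (1, 0)) y (0, 1)) ^ 2)) * (δ * δ))) / (δ * δ) := by
    rw [le_div_iff₀ hδδ]
    linarith [hfinal]
  refine hdiv.trans (le_of_eq ?_)
  field_simp
  ring
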